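/- There exists an instance of unweighted directed tree augmentation (a directed tree on 6 vertices with 5 links) whose natural set-covering LP relaxation has optimal value 5/2 while the minimum integral solution has size 3; hence the integrality gap of the set-covering LP for DTAP is at least 6/5. -/
import Mathlib


open scoped Classical

/-- A tree on vertex set `V`, rooted at `root`, encoded via the parent function.
Every non-root vertex `z` corresponds to the unique tree edge/arc `a_z` between
`z` and `parent z`. -/
structure ArcTree (V : Type*) where
  root : V
  parent : V → V
  parent_root : parent root = root
  reaches_root : ∀ v : V, ∃ n : ℕ, parent^[n] v = root

namespace ArcTree

variable {V : Type*}

/-- `x` is an ancestor of `y` (possibly `x = y`). -/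
def anc (T : ArcTree V) (x y : V) : Prop := ∃ n : ℕ, T.parent^[n] y = x

/-- The arc `a_z` (between `z` and `parent z`, for `z ≠ root`) lies on the
tree path between `u` and `v`. -/
def arcOnPath (T : ArcTree V) (u v z : V) : Prop :=
  z ≠ T.root ∧ ¬ (T.anc z u ↔ T.anc z v)

/-- The vertex `x` lies on the tree path between `u` and `v`. -/
def onPath (T : ArcTree V) (u v x : V) : Prop :=
  (T.anc x u ∨ T.anc x v) ∧ ∀ z, T.anc z u → T.anc z v → T.anc z x

/-- `x` is an inner vertex of the tree path between `u` and `v`. -/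
def innerOnPath (T : ArcTree V) (u v x : V) : Prop :=
  T.onPath u v x ∧ x ≠ u ∧ x ≠ v

/-- `w` is the least common ancestor of `u` and `v`. -/
def isLca (T : ArcTree V) (u v w : V) : Prop :=
  T.anc w u ∧ T.anc w v ∧ ∀ z, T.anc z u → T.anc z v → T.anc z w

end ArcTree

section Cover

variable {V : Type*}

/- Orientation convention: `up z = true` means the arc `a_z` is directed from `z` to
`parent z` (an up-arc, pointing towards the root); `up z = false` means it is directed
from `parent z` to `z` (a down-arc). -/

/-- The directed link `ℓ = (u, v)` covers the arc `a_z`, i.e. `a_z` is a backward arc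
of the tree path from `u` to `v` (equivalently, the walk from `v` back to `u`
traverses `a_z` in its forward direction). -/
def covers (T : ArcTree V) (up : V → Bool) (ℓ : V × V) (z : V) : Prop :=
  z ≠ T.root ∧
    ((T.anc z ℓ.2 ∧ ¬ T.anc z ℓ.1 ∧ up z = true) ∨
     (T.anc z ℓ.1 ∧ ¬ T.anc z ℓ.2 ∧ up z = false))

/-- The link `ℓ = (u,v)` covers the arc `a_z` in the wrong direction, i.e. `a_z` is a
forward arc of the tree path from `u` to `v`. -/
def wcovers (T : ArcTree V) (up : V → Bool) (ℓ : V × V) (z : V) : Prop :=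
  z ≠ T.root ∧
    ((T.anc z ℓ.1 ∧ ¬ T.anc z ℓ.2 ∧ up z = true) ∨
     (T.anc z ℓ.2 ∧ ¬ T.anc z ℓ.1 ∧ up z = false))

/-- `ℓ'` is a shadow of `ℓ`: the endpoints of `ℓ'` lie, in this order, on the tree path
of `ℓ`. -/
def IsShadow (T : ArcTree V) (ℓ ℓ' : V × V) : Prop :=
  T.onPath ℓ.1 ℓ.2 ℓ'.1 ∧ T.onPath ℓ'.1 ℓ.2 ℓ'.2

/-- `x` is an inner vertex of the path of the generic shadow of `ℓ` (the minimal shadow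
with the same directed coverage): `x` lies on `P_ℓ` and `ℓ` covers arcs on both sides
of `x`. -/
def innerGeneric (T : ArcTree V) (up : V → Bool) (ℓ : V × V) (x : V) : Prop :=
  T.onPath ℓ.1 ℓ.2 x ∧
    (∃ z, covers T up ℓ z ∧ T.arcOnPath ℓ.1 x z) ∧
    (∃ z, covers T up ℓ z ∧ T.arcOnPath x ℓ.2 z)

/-- The arc `a_z` (lying in the subtree of `v`) is visible to `v` with respect to the
link set `L'`. -/
def visibleArc (T : ArcTree V) (up : V → Bool) (L' : Set (V × V)) (v z : V) : Prop :=
  T.anc v z ∧ z ≠ v ∧ ∃ ℓ ∈ L', covers T up ℓ z ∧ innerGeneric T up ℓ v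

/-- A set of arcs (encoded by their lower endpoints) is ancestor-free: no arc of the
set lies on the path from another arc's apex (top endpoint) to the root. -/
def AncestorFree (T : ArcTree V) (S : Set V) : Prop :=
  ∀ z ∈ S, ∀ z' ∈ S, z ≠ z' → ¬ T.anc z' (T.parent z)

/-- The visible up-width of `v` w.r.t. the link set `L'` is at most `k`. -/
def upWidthLE (T : ArcTree V) (up : V → Bool) (L' : Set (V × V)) (v : V) (k : ℕ) : Prop :=
  ∀ S : Finset V, AncestorFree T (S : Set V) →
    (∀ z ∈ S, up z = true ∧ visibleArc T up L' v z) → S.card ≤ k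

/-- The visible down-width of `v` w.r.t. the link set `L'` is at most `k`. -/
def downWidthLE (T : ArcTree V) (up : V → Bool) (L' : Set (V × V)) (v : V) (k : ℕ) : Prop :=
  ∀ S : Finset V, AncestorFree T (S : Set V) →
    (∀ z ∈ S, up z = false ∧ visibleArc T up L' v z) → S.card ≤ k

/-- The link `ℓ` points into the subtree `T_v`. -/
def pointsInto (T : ArcTree V) (v : V) (ℓ : V × V) : Prop :=
  T.anc v ℓ.2 ∧ ℓ.2 ≠ v ∧ ¬ T.anc v ℓ.1

/-- The link `ℓ` points out of the subtree `T_v`. -/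
def pointsOut (T : ArcTree V) (v : V) (ℓ : V × V) : Prop :=
  T.anc v ℓ.1 ∧ ℓ.1 ≠ v ∧ ¬ T.anc v ℓ.2

/-- `v` is up-independent w.r.t. the link set `L'`: every link either covers no up-arc
of the subtree `T_v`, or its whole coverage lies inside `T_v`. -/
def upIndep (T : ArcTree V) (up : V → Bool) (L' : Set (V × V)) (v : V) : Prop :=
  ∀ ℓ ∈ L', (¬ ∃ z, covers T up ℓ z ∧ T.anc v z ∧ z ≠ v ∧ up z = true) ∨
    (∀ z, covers T up ℓ z → T.anc v z ∧ z ≠ v)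

/-- `v` is down-independent w.r.t. the link set `L'`. -/
def downIndep (T : ArcTree V) (up : V → Bool) (L' : Set (V × V)) (v : V) : Prop :=
  ∀ ℓ ∈ L', (¬ ∃ z, covers T up ℓ z ∧ T.anc v z ∧ z ≠ v ∧ up z = false) ∨
    (∀ z, covers T up ℓ z → T.anc v z ∧ z ≠ v)

/-- A feasible (integral) solution: every arc is covered by some link of `F`. -/
def Feasible (T : ArcTree V) (up : V → Bool) (F : Finset (V × V)) : Prop :=
  ∀ z, z ≠ T.root → ∃ ℓ ∈ F, covers T up ℓ z

/-- `F` is shadow-minimal: no link of `F` can be replaced by a proper shadow while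
maintaining feasibility. -/
def ShadowMinimal (T : ArcTree V) (up : V → Bool) (F : Finset (V × V)) : Prop :=
  ∀ ℓ ∈ F, ∀ ℓ' : V × V, IsShadow T ℓ ℓ' → ℓ' ≠ ℓ →
    ¬ Feasible T up (insert ℓ' (F.erase ℓ))

/-- A splitting of the link set: each link is mapped to a set of shadows whose tree
paths partition the arc set of its tree path. -/
def IsSplitting (T : ArcTree V) (σ : V × V → Finset (V × V)) : Prop :=
  ∀ ℓ : V × V,
    (σ ℓ).Nonempty ∧
    (∀ ℓ' ∈ σ ℓ, IsShadow T ℓ ℓ' ∧ (ℓ'.1 ≠ ℓ'.2 ∨ ℓ' = ℓ)) ∧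
    (∀ z, T.arcOnPath ℓ.1 ℓ.2 z ↔ ∃ ℓ' ∈ σ ℓ, T.arcOnPath ℓ'.1 ℓ'.2 z) ∧
    (∀ ℓ₁ ∈ σ ℓ, ∀ ℓ₂ ∈ σ ℓ, ℓ₁ ≠ ℓ₂ →
      ∀ z, T.arcOnPath ℓ₁.1 ℓ₁.2 z → ¬ T.arcOnPath ℓ₂.1 ℓ₂.2 z)

/-- The LP solution obtained from `x` by applying the splitting `σ`. -/
noncomputable def splitSol [Fintype V] (σ : V × V → Finset (V × V)) (x : V × V → ℝ) :
    V × V → ℝ :=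
  fun ℓ' => ∑ ℓ : V × V, if ℓ' ∈ σ ℓ then x ℓ else 0

/-- `x` is a feasible solution of the WDTAP set-covering LP. -/
def FeasLP [Fintype V] (T : ArcTree V) (up : V → Bool) (x : V × V → ℝ) : Prop :=
  (∀ ℓ, 0 ≤ x ℓ) ∧
    ∀ z, z ≠ T.root → 1 ≤ ∑ ℓ : V × V, if covers T up ℓ z then x ℓ else 0

end Cover


section DTAPInstance

/-- Parent function of our 6-vertex tree: 1,2,3 are children of the root 0; 4,5 children of 1. -/
def pF : Fin 6 → Fin 6 := ![0,0,0,0,1,1]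

/-- Orientations of the five arcs. -/
def upF : Fin 6 → Bool := ![false,false,true,false,true,false]

/-- The tree. -/
def TT : ArcTree (Fin 6) := ⟨0, pF, rfl, fun v => ⟨2, by fin_cases v <;> rfl⟩⟩

lemma p2 : ∀ v : Fin 6, pF (pF v) = 0 := by decide

lemma anc_iff (x y : Fin 6) : TT.anc x y ↔ (y = x ∨ pF y = x ∨ pF (pF y) = x) := by
  constructor
  · rintro ⟨n, h⟩
    match n, h with
    | 0, h => exact Or.inl h
    | 1, h => exact Or.inr (Or.inl h)
    | (k+2), h =>
      refine Or.inr (Or.inr ?_)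
      rw [p2 y]
      rw [Function.iterate_add_apply] at h
      rw [show (TT.parent^[2] y) = pF (pF y) from rfl, p2 y] at h
      rwa [Function.iterate_fixed rfl] at h
  · rintro (h | h | h)
    · exact ⟨0, h⟩
    · exact ⟨1, h⟩
    · exact ⟨2, h⟩

/-- Boolean version of `covers` for our instance. -/
def covB (ℓ : Fin 6 × Fin 6) (z : Fin 6) : Bool :=
  (z != 0) && ((((ℓ.2 == z) || (pF ℓ.2 == z) || (pF (pF ℓ.2) == z)) && !((ℓ.1 == z) || (pF ℓ.1 == z) || (pF (pF ℓ.1) == z)) && upF z) ||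
    (((ℓ.1 == z) || (pF ℓ.1 == z) || (pF (pF ℓ.1) == z)) && !((ℓ.2 == z) || (pF ℓ.2 == z) || (pF (pF ℓ.2) == z)) && !(upF z)))

lemma covers_iff (ℓ : Fin 6 × Fin 6) (z : Fin 6) :
    covers TT upF ℓ z ↔ covB ℓ z = true := by
  unfold covers
  simp only [anc_iff]
  revert z ℓ
  decide

/-- The five links. -/
def LL : Finset (Fin 6 × Fin 6) := {(1,2),(3,2),(3,4),(5,0),(5,4)}

lemma sum_LL (f : Fin 6 × Fin 6 → ℝ) :
    ∑ ℓ ∈ LL, f ℓ = f (1,2) + f (3,2) + f (3,4) + f (5,0) + f (5,4) := by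
  show ∑ ℓ ∈ ({(1,2),(3,2),(3,4),(5,0),(5,4)} : Finset (Fin 6 × Fin 6)), f ℓ = _
  rw [Finset.sum_insert (by decide), Finset.sum_insert (by decide),
    Finset.sum_insert (by decide), Finset.sum_insert (by decide), Finset.sum_singleton]
  ring

end DTAPInstance


/-- There is a DTAP instance on 6 vertices with 5 (unit-cost) links whose
set-covering LP has optimal value `5/2` while the minimum integral solution has size `3`;
hence the integrality gap is at least `6/5`. -/

theorem dtap_integrality_gap_lower_bound :
    ∃ (V : Type) (hV : Fintype V) (T : ArcTree V) (up : V → Bool) (L : Finset (V × V)),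
      @Fintype.card V hV = 6 ∧ L.card = 5 ∧
      -- a feasible fractional solution of value 5/2
      (∃ x : V × V → ℝ, (∀ ℓ, 0 ≤ x ℓ) ∧ (∀ ℓ ∉ L, x ℓ = 0) ∧
        (∀ z, z ≠ T.root → 1 ≤ ∑ ℓ ∈ L, if covers T up ℓ z then x ℓ else 0) ∧
        ∑ ℓ ∈ L, x ℓ = 5 / 2) ∧
      -- every feasible fractional solution has value at least 5/2
      (∀ x : V × V → ℝ, (∀ ℓ, 0 ≤ x ℓ) →
        (∀ z, z ≠ T.root → 1 ≤ ∑ ℓ ∈ L, if covers T up ℓ z then x ℓ else 0) →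
        5 / 2 ≤ ∑ ℓ ∈ L, x ℓ) ∧
      -- an integral solution of size 3
      (∃ F : Finset (V × V), F ⊆ L ∧ Feasible T up F ∧ F.card = 3) ∧
      -- every integral solution has size at least 3
      (∀ F : Finset (V × V), F ⊆ L → Feasible T up F → 3 ≤ F.card) ∧
      -- hence the integrality gap is at least 6/5
      (6 / 5 : ℝ) ≤ 3 / (5 / 2) := by
    classical
  refine ⟨Fin 6, inferInstance, TT, upF, LL, by simp, by decide, ?_, ?_, ?_, ?_, by norm_num⟩
  · -- fractional solution of value 5/2
    refine ⟨fun ℓ => if ℓ ∈ LL then (1/2 : ℝ) else 0, ?_, ?_, ?_, ?_⟩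
    · intro ℓ; dsimp only; split <;> norm_num
    · intro ℓ hℓ; simp [hℓ]
    · intro z hz
      fin_cases z
      · exact absurd rfl hz
      all_goals
        rw [sum_LL]
        simp (config := { decide := true }) only [covers_iff, LL]
        norm_num
    · rw [sum_LL]; norm_num [LL]
  · -- LP lower bound
    intro x hx hc
    have h1 := hc 1 (by decide)
    have h2 := hc 2 (by decide)
    have h3 := hc 3 (by decide)
    have h4 := hc 4 (by decide)
    have h5 := hc 5 (by decide)
    rw [sum_LL] at h1 h2 h3 h4 h5
    simp (config := { decide := true }) only [covers_iff, if_true, if_false, add_zero, zero_add] at h1 h2 h3 h4 h5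
    rw [sum_LL]
    linarith
  · -- integral solution of size 3
    refine ⟨{(1,2),(3,2),(5,4)}, by decide, ?_, by decide⟩
    intro z hz
    fin_cases z
    · exact absurd rfl hz
    · exact ⟨(1,2), by decide, (covers_iff _ _).mpr (by decide)⟩
    · exact ⟨(1,2), by decide, (covers_iff _ _).mpr (by decide)⟩
    · exact ⟨(3,2), by decide, (covers_iff _ _).mpr (by decide)⟩
    · exact ⟨(5,4), by decide, (covers_iff _ _).mpr (by decide)⟩
    · exact ⟨(5,4), by decide, (covers_iff _ _).mpr (by decide)⟩
  · -- every integral solution has size at least 3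
    intro F hF hFeas
    by_contra hcard
    push_neg at hcard
    have hF2 : F.card ≤ 2 := Nat.lt_succ_iff.mp hcard
    set S : Finset (Fin 6) := {1,2,3,4,5} with hS
    have hSne : ∀ z ∈ S, z ≠ (0 : Fin 6) := by decide
    have hex : ∀ z : Fin 6, ∃ ℓ : Fin 6 × Fin 6, z ∈ S → ℓ ∈ F ∧ covB ℓ z = true := by
      intro z
      by_cases hzS : z ∈ S
      · obtain ⟨ℓ, hℓF, hcov⟩ := hFeas z (hSne z hzS)
        exact ⟨ℓ, fun _ => ⟨hℓF, (covers_iff _ _).mp hcov⟩⟩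
      · exact ⟨(0,0), fun h => absurd h hzS⟩
    choose g hg using hex
    have hmaps : ∀ z ∈ S, g z ∈ F := fun z hz => (hg z hz).1
    have hlt : F.card * 2 < S.card := by
      have : S.card = 5 := by decide
      omega
    obtain ⟨ℓ, hℓF, hfib⟩ :=
      Finset.exists_lt_card_fiber_of_mul_lt_card_of_maps_to hmaps hlt
    have hbound : ∀ ℓ ∈ LL,
        (Finset.univ.filter fun z : Fin 6 => covB ℓ z = true).card ≤ 2 := by decide
    have hsub : (S.filter fun z => g z = ℓ) ⊆
        (Finset.univ.filter fun z : Fin 6 => covB ℓ z = true) := by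
      intro z hz
      rw [Finset.mem_filter] at hz ⊢
      exact ⟨Finset.mem_univ _, hz.2 ▸ (hg z hz.1).2⟩
    have := (Finset.card_le_card hsub).trans (hbound ℓ (hF hℓF))
    omega
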